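/- (Bernoulli sampling upper bound for p-way join size.) Let p ≥ 2 and n be positive integers, let V be a finite type with |V| ≤ p·n, let E be a nonempty Finset of Finsets of V with every e ∈ E of cardinality p and with every vertex degree d_v ≤ n^{p−1}. Let (ξ_v)_{v ∈ V} be independent random variables on a probability space, each taking values in {0, 1} with P(ξ_v = 1) = q, where 1/(p·n) ≤ q ≤ 1, and let X := Σ_{e ∈ E} Π_{v ∈ e} ξ_v. Then Var(X) ≤ 2p·|E|·n^{p−1}·q^{p+1}, and consequently for every θ > 0, P(|q^{−p}·X − |E|| ≥ θ·|E|) ≤ 2p·n^{p−1}/(θ²·|E|·q^{p−1}). -/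

import Mathlib

open MeasureTheory ProbabilityTheory

/-- Bernoulli sampling upper bound for `p`-way join size, encoded as a
`p`-uniform hypergraph with at most `p·n` vertices and degrees at most `n^{p−1}`:
for Bernoulli vertex-sampling probability `q ≥ 1/(pn)`, the edge-count
`X = Σ_{e ∈ E} Π_{v ∈ e} ξ_v` satisfies `Var(X) ≤ 2p·|E|·n^{p−1}·q^{p+1}`, and
hence the estimate `q^{−p}·X` of `|E|` has relative error at least `θ` with
probability at most `2p·n^{p−1}/(θ²·|E|·q^{p−1})`. -/
theorem stmt19 {V : Type*} [Fintype V] [DecidableEq V] {Ω : Type*}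
    [MeasurableSpace Ω] (μ : Measure Ω) [IsProbabilityMeasure μ]
    (p n : ℕ) (hp : 2 ≤ p) (hn : 0 < n) (hV : Fintype.card V ≤ p * n)
    (E : Finset (Finset V)) (hEne : E.Nonempty) (hE : ∀ e ∈ E, e.card = p)
    (hdeg : ∀ v : V, (E.filter (fun e => v ∈ e)).card ≤ n ^ (p - 1))
    (ξ : V → Ω → ℝ) (hmeas : ∀ v, Measurable (ξ v))
    (hindep : iIndepFun ξ μ)
    (hval : ∀ v ω, ξ v ω = 0 ∨ ξ v ω = 1)
    (q : ℝ) (hqlb : 1 / ((p : ℝ) * n) ≤ q) (hq1 : q ≤ 1)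
    (hq : ∀ v, μ {ω | ξ v ω = 1} = ENNReal.ofReal q) :
    ((∫ ω, (∑ e ∈ E, ∏ v ∈ e, ξ v ω) ^ 2 ∂μ)
        - (∫ ω, ∑ e ∈ E, ∏ v ∈ e, ξ v ω ∂μ) ^ 2
      ≤ 2 * (p : ℝ) * E.card * (n : ℝ) ^ (p - 1) * q ^ (p + 1)) ∧
    ∀ θ : ℝ, 0 < θ →
      (μ {ω | θ * (E.card : ℝ) ≤
          |(∑ e ∈ E, ∏ v ∈ e, ξ v ω) / q ^ p - (E.card : ℝ)|}).toReal
        ≤ 2 * (p : ℝ) * (n : ℝ) ^ (p - 1) / (θ ^ 2 * E.card * q ^ (p - 1)) := by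
  classical
  have hp0 : (0:ℝ) < p := by exact_mod_cast lt_of_lt_of_le two_pos hp
  have hn0 : (0:ℝ) < n := by exact_mod_cast hn
  have hq0 : (0:ℝ) < q := lt_of_lt_of_le (by positivity) hqlb
  have hEc0 : (0:ℝ) < E.card := by exact_mod_cast Finset.card_pos.mpr hEne
  -- measurability / integrability of products
  have hmeasP : ∀ s : Finset V, Measurable fun ω => ∏ v ∈ s, ξ v ω :=
    fun s => Finset.measurable_prod s fun v _ => hmeas v
  have hnn : ∀ v ω, 0 ≤ ξ v ω ∧ ξ v ω ≤ 1 := by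
    intro v ω; rcases hval v ω with h | h <;> simp [h]
  have hPmem : ∀ (s : Finset V) ω, (∏ v ∈ s, ξ v ω) ∈ Set.Icc (0:ℝ) 1 := fun s ω =>
    ⟨Finset.prod_nonneg fun v _ => (hnn v ω).1,
     Finset.prod_le_one (fun v _ => (hnn v ω).1) fun v _ => (hnn v ω).2⟩
  have hL2 : ∀ s : Finset V, MemLp (fun ω => ∏ v ∈ s, ξ v ω) 2 μ := fun s =>
    memLp_of_bounded (ae_of_all _ (hPmem s)) (hmeasP s).aestronglyMeasurable 2
  have hInt : ∀ s : Finset V, Integrable (fun ω => ∏ v ∈ s, ξ v ω) μ := fun s =>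
    (memLp_one_iff_integrable).mp
      (memLp_of_bounded (ae_of_all _ (hPmem s)) (hmeasP s).aestronglyMeasurable 1)
  -- mean of a single variable
  have hmean1 : ∀ v, ∫ ω, ξ v ω ∂μ = q := by
    intro v
    have hset : MeasurableSet {ω | ξ v ω = 1} := (hmeas v) (measurableSet_singleton 1)
    have hrepr : (fun ω => ξ v ω) = Set.indicator {ω | ξ v ω = 1} (fun _ => (1:ℝ)) := by
      funext ω
      rcases hval v ω with h | h <;> simp [Set.indicator_apply, Set.mem_setOf_eq, h]
    rw [hrepr, integral_indicator_const _ hset, measureReal_def, hq v, smul_eq_mul, mul_one,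
      ENNReal.toReal_ofReal hq0.le]
  -- mean of a product over a finset
  have hmeanP : ∀ s : Finset V, ∫ ω, ∏ v ∈ s, ξ v ω ∂μ = q ^ s.card := by
    intro s
    induction s using Finset.induction_on with
    | empty => simp
    | insert a s ha ih =>
      have hind : IndepFun (fun ω => ∏ v ∈ s, ξ v ω) (ξ a) μ := by
        have h := hindep.indepFun_finsetProd_of_notMem hmeas ha
        convert h using 2
        simp
      have h1 : ∀ ω : Ω, ∏ v ∈ insert a s, ξ v ω = (∏ v ∈ s, ξ v ω) * ξ a ω := by
        intro ω; rw [Finset.prod_insert ha]; ring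
      calc ∫ ω, ∏ v ∈ insert a s, ξ v ω ∂μ
          = ∫ ω, (∏ v ∈ s, ξ v ω) * ξ a ω ∂μ := by simp_rw [h1]
        _ = (∫ ω, ∏ v ∈ s, ξ v ω ∂μ) * ∫ ω, ξ a ω ∂μ :=
            IndepFun.integral_mul_eq_mul_integral hind (hmeasP s).aestronglyMeasurable (hmeas a).aestronglyMeasurable
        _ = q ^ (insert a s).card := by
            rw [ih, hmean1 a, Finset.card_insert_of_notMem ha, pow_succ]
  -- product absorption over union
  have hPU : ∀ (e f : Finset V) (ω : Ω),
      (∏ v ∈ e, ξ v ω) * ∏ v ∈ f, ξ v ω = ∏ v ∈ e ∪ f, ξ v ω := by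
    intro e f ω
    by_cases h : ∀ v ∈ e ∩ f, ξ v ω = 1
    · rw [← Finset.prod_union_inter, Finset.prod_eq_one h, mul_one]
    · push_neg at h
      obtain ⟨v, hv, hv1⟩ := h
      have hv0 : ξ v ω = 0 := (hval v ω).resolve_right hv1
      rw [Finset.prod_eq_zero (Finset.mem_inter.mp hv).1 hv0,
        Finset.prod_eq_zero (Finset.mem_union_left f (Finset.mem_inter.mp hv).1) hv0, zero_mul]
  -- mean of X
  have hmeanX : ∫ ω, (∑ e ∈ E, ∏ v ∈ e, ξ v ω) ∂μ = E.card * q ^ p := by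
    rw [integral_finset_sum _ fun e _ => hInt e]
    rw [Finset.sum_congr rfl fun e he => by rw [hmeanP e, hE e he]]
    rw [Finset.sum_const, nsmul_eq_mul]
  -- second moment
  have hsqX : ∫ ω, (∑ e ∈ E, ∏ v ∈ e, ξ v ω) ^ 2 ∂μ
      = ∑ e ∈ E, ∑ f ∈ E, q ^ (e ∪ f).card := by
    have h1 : ∀ ω : Ω, (∑ e ∈ E, ∏ v ∈ e, ξ v ω) ^ 2
        = ∑ e ∈ E, ∑ f ∈ E, ∏ v ∈ e ∪ f, ξ v ω := by
      intro ω
      rw [sq, Finset.sum_mul_sum]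
      exact Finset.sum_congr rfl fun e _ => Finset.sum_congr rfl fun f _ => hPU e f ω
    simp_rw [h1]
    rw [integral_finset_sum _ fun e _ => integrable_finset_sum _ fun f _ => hInt (e ∪ f)]
    exact Finset.sum_congr rfl fun e _ => by
      rw [integral_finset_sum _ fun f _ => hInt (e ∪ f)]
      exact Finset.sum_congr rfl fun f _ => hmeanP (e ∪ f)
  -- n ≤ n^(p-1)
  have hnp : (n:ℝ) ≤ (n:ℝ) ^ (p - 1) := by
    have h1 : (1:ℝ) ≤ (n:ℝ) := by exact_mod_cast hn
    calc (n:ℝ) = (n:ℝ) ^ 1 := (pow_one _).symm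
      _ ≤ (n:ℝ) ^ (p - 1) := pow_le_pow_right₀ h1 (by omega)
  -- key variance bound, inner sum
  have key : ∀ e ∈ E, ∑ f ∈ E, (q ^ (e ∪ f).card - q ^ p * q ^ p)
      ≤ 2 * (p:ℝ) * (n:ℝ) ^ (p - 1) * q ^ (p + 1) := by
    intro e he
    rw [← Finset.add_sum_erase _ _ he]
    have hdiag : q ^ (e ∪ e).card - q ^ p * q ^ p
        ≤ (p:ℝ) * (n:ℝ) ^ (p - 1) * q ^ (p + 1) := by
      rw [Finset.union_self, hE e he]
      have h2 : (1:ℝ) ≤ (p:ℝ) * n * q := by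
        rw [div_le_iff₀ (by positivity)] at hqlb
        linarith [hqlb]
      have h1 : q ^ p ≤ (p:ℝ) * n * q ^ (p + 1) := by
        calc q ^ p = 1 * q ^ p := (one_mul _).symm
          _ ≤ ((p:ℝ) * n * q) * q ^ p := mul_le_mul_of_nonneg_right h2 (by positivity)
          _ = (p:ℝ) * n * q ^ (p + 1) := by rw [pow_succ]; ring
      have h3 : (p:ℝ) * n * q ^ (p+1) ≤ (p:ℝ) * (n:ℝ) ^ (p-1) * q ^ (p+1) :=
        mul_le_mul_of_nonneg_right (mul_le_mul_of_nonneg_left hnp hp0.le) (by positivity)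
      nlinarith [pow_nonneg hq0.le p, sq_nonneg (q ^ p)]
    have hoff : ∑ f ∈ E.erase e, (q ^ (e ∪ f).card - q ^ p * q ^ p)
        ≤ (p:ℝ) * (n:ℝ) ^ (p - 1) * q ^ (p + 1) := by
      have hterm : ∀ f ∈ E.erase e, (q ^ (e ∪ f).card - q ^ p * q ^ p)
          ≤ if (e ∩ f).Nonempty then q ^ (p + 1) else 0 := by
        intro f hf
        have hfE : f ∈ E := Finset.mem_of_mem_erase hf
        have hfe : f ≠ e := Finset.ne_of_mem_erase hf
        by_cases hint : (e ∩ f).Nonempty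
        · simp only [hint, if_true]
          have hcard : p + 1 ≤ (e ∪ f).card := by
            by_contra hcon
            push_neg at hcon
            have hsub : e ⊆ e ∪ f := Finset.subset_union_left
            have hle : (e ∪ f).card ≤ e.card := by rw [hE e he]; omega
            have heq : e = e ∪ f := Finset.eq_of_subset_of_card_le hsub hle
            have hfsub : f ⊆ e := by rw [heq]; exact Finset.subset_union_right
            exact hfe (Finset.eq_of_subset_of_card_le hfsub (by rw [hE e he, hE f hfE]))
          have hub : q ^ (e ∪ f).card ≤ q ^ (p + 1) :=
            pow_le_pow_of_le_one hq0.le hq1 hcard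
          nlinarith [pow_nonneg hq0.le p]
        · simp only [hint, if_false]
          rw [Finset.not_nonempty_iff_eq_empty] at hint
          have hdisj : Disjoint e f := Finset.disjoint_iff_inter_eq_empty.mpr hint
          rw [Finset.card_union_of_disjoint hdisj, hE e he, hE f hfE, ← pow_add]
          simp
      have hcount : (((E.erase e).filter (fun f => (e ∩ f).Nonempty)).card : ℝ)
          ≤ (p:ℝ) * (n:ℝ) ^ (p - 1) := by
        have hsubset : (E.erase e).filter (fun f => (e ∩ f).Nonempty)
            ⊆ e.biUnion (fun v => E.filter (fun f => v ∈ f)) := by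
          intro f hf
          simp only [Finset.mem_filter, Finset.mem_erase] at hf
          obtain ⟨⟨_, hfE⟩, v, hv⟩ := hf
          rw [Finset.mem_biUnion]
          exact ⟨v, (Finset.mem_inter.mp hv).1,
            Finset.mem_filter.mpr ⟨hfE, (Finset.mem_inter.mp hv).2⟩⟩
        have h1 : ((E.erase e).filter (fun f => (e ∩ f).Nonempty)).card
            ≤ p * n ^ (p - 1) := by
          calc ((E.erase e).filter (fun f => (e ∩ f).Nonempty)).card
              ≤ (e.biUnion (fun v => E.filter (fun f => v ∈ f))).card :=
                Finset.card_le_card hsubset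
            _ ≤ ∑ v ∈ e, (E.filter (fun f => v ∈ f)).card := Finset.card_biUnion_le
            _ ≤ ∑ v ∈ e, n ^ (p - 1) := Finset.sum_le_sum fun v _ => hdeg v
            _ = p * n ^ (p - 1) := by
                rw [Finset.sum_const, smul_eq_mul, hE e he]
        calc (((E.erase e).filter (fun f => (e ∩ f).Nonempty)).card : ℝ)
            ≤ ((p * n ^ (p - 1) : ℕ) : ℝ) := by exact_mod_cast h1
          _ = (p:ℝ) * (n:ℝ) ^ (p - 1) := by push_cast; ring
      calc ∑ f ∈ E.erase e, (q ^ (e ∪ f).card - q ^ p * q ^ p)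
          ≤ ∑ f ∈ E.erase e, (if (e ∩ f).Nonempty then q ^ (p + 1) else 0) :=
            Finset.sum_le_sum hterm
        _ = (((E.erase e).filter (fun f => (e ∩ f).Nonempty)).card : ℝ) * q ^ (p + 1) := by
            rw [← Finset.sum_filter, Finset.sum_const, nsmul_eq_mul]
        _ ≤ (p:ℝ) * (n:ℝ) ^ (p - 1) * q ^ (p + 1) :=
            mul_le_mul_of_nonneg_right hcount (by positivity)
    linarith
  -- Part 1: variance bound
  have hVar1 : (∫ ω, (∑ e ∈ E, ∏ v ∈ e, ξ v ω) ^ 2 ∂μ)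
      - (∫ ω, ∑ e ∈ E, ∏ v ∈ e, ξ v ω ∂μ) ^ 2
      ≤ 2 * (p : ℝ) * E.card * (n : ℝ) ^ (p - 1) * q ^ (p + 1) := by
    rw [hsqX, hmeanX]
    have hsq : ((E.card : ℝ) * q ^ p) ^ 2 = ∑ _e ∈ E, ∑ _f ∈ E, q ^ p * q ^ p := by
      simp only [Finset.sum_const, nsmul_eq_mul]
      ring
    rw [hsq, ← Finset.sum_sub_distrib]
    simp_rw [← Finset.sum_sub_distrib]
    calc ∑ e ∈ E, ∑ f ∈ E, (q ^ (e ∪ f).card - q ^ p * q ^ p)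
        ≤ ∑ _e ∈ E, 2 * (p:ℝ) * (n:ℝ) ^ (p - 1) * q ^ (p + 1) :=
          Finset.sum_le_sum key
      _ = 2 * (p : ℝ) * E.card * (n : ℝ) ^ (p - 1) * q ^ (p + 1) := by
          rw [Finset.sum_const, nsmul_eq_mul]; ring
  refine ⟨hVar1, ?_⟩
  -- Part 2: Chebyshev
  intro θ hθ
  set X : Ω → ℝ := fun ω => ∑ e ∈ E, ∏ v ∈ e, ξ v ω with hXdef
  have hL2X : MemLp X 2 μ := by
    have h := memLp_finsetSum' E fun e (_ : e ∈ E) => hL2 e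
    rwa [Finset.sum_fn] at h
  have hmX : μ[X] = E.card * q ^ p := hmeanX
  have hvarle : variance X μ ≤ 2 * (p : ℝ) * E.card * (n : ℝ) ^ (p - 1) * q ^ (p + 1) := by
    rw [variance_eq_sub hL2X]
    have hX2 : μ[X ^ 2] = ∫ ω, (∑ e ∈ E, ∏ v ∈ e, ξ v ω) ^ 2 ∂μ := by
      apply integral_congr_ae
      filter_upwards with ω
      simp [hXdef]
    rw [hX2, hmX, ← hmeanX]
    exact hVar1
  have hc : 0 < θ * ((E.card : ℝ) * q ^ p) :=
    mul_pos hθ (mul_pos hEc0 (pow_pos hq0 p))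
  have hcheb := meas_ge_le_variance_div_sq (μ := μ) hL2X hc
  have hsets : {ω | θ * (E.card : ℝ) ≤
        |(∑ e ∈ E, ∏ v ∈ e, ξ v ω) / q ^ p - (E.card : ℝ)|}
      = {ω | θ * ((E.card : ℝ) * q ^ p) ≤ |X ω - μ[X]|} := by
    ext ω
    simp only [Set.mem_setOf_eq, hmX]
    have hrw : (∑ e ∈ E, ∏ v ∈ e, ξ v ω) / q ^ p - (E.card : ℝ)
        = (X ω - (E.card : ℝ) * q ^ p) / q ^ p := by
      rw [hXdef]
      field_simp
    rw [hrw, abs_div, abs_of_pos (pow_pos hq0 p), le_div_iff₀ (pow_pos hq0 p), mul_assoc]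
  rw [hsets]
  have hvnn : 0 ≤ variance X μ / (θ * ((E.card : ℝ) * q ^ p)) ^ 2 := by
    apply div_nonneg (variance_nonneg _ _) (by positivity)
  have hqpow : q ^ (p + 1) * q ^ (p - 1) = q ^ p * q ^ p := by
    rw [← pow_add, ← pow_add]
    congr 1
    omega
  calc (μ {ω | θ * ((E.card : ℝ) * q ^ p) ≤ |X ω - μ[X]|}).toReal
      ≤ (ENNReal.ofReal (variance X μ / (θ * ((E.card : ℝ) * q ^ p)) ^ 2)).toReal :=
        ENNReal.toReal_mono ENNReal.ofReal_ne_top hcheb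
    _ = variance X μ / (θ * ((E.card : ℝ) * q ^ p)) ^ 2 := ENNReal.toReal_ofReal hvnn
    _ ≤ (2 * (p : ℝ) * E.card * (n : ℝ) ^ (p - 1) * q ^ (p + 1))
          / (θ * ((E.card : ℝ) * q ^ p)) ^ 2 := by gcongr
    _ = 2 * (p : ℝ) * (n : ℝ) ^ (p - 1) / (θ ^ 2 * E.card * q ^ (p - 1)) := by
        rw [div_eq_div_iff (by positivity) (by positivity)]
        linear_combination (2 * (p:ℝ) * (E.card:ℝ)^2 * (n:ℝ)^(p-1) * θ^2) * hqpow
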